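/- For every k >= 1, the twincut graph G_k is edge-critical: for every edge e of G_k, the graph G_k minus e is (k-1)-colorable. -/

import Mathlib

/-- A structured tree: a rooted tree together with, at each internal node,
a graph on its children. A `leaf` is a tree with a single (leaf) node; a
`node ι c g` has children indexed by `ι`, subtrees `c i`, and the graph `g`
on the children. -/
inductive STree : Type 1 where
  | leaf : STree
  | node : (ι : Type) → (ι → STree) → SimpleGraph ι → STree

namespace STree

/-- The type of nodes of a structured tree. -/
def NodeType : STree → Type
  | leaf => PUnit
  | node ι c _ => PUnit ⊕ Σ i : ι, NodeType (c i)

/-- The type of branches (root-to-leaf paths) of a structured tree. -/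
def Branch : STree → Type
  | leaf => PUnit
  | node _ c _ => Σ i, Branch (c i)

/-- The root of a structured tree, as a node. -/
def root : (t : STree) → t.NodeType
  | leaf => PUnit.unit
  | node _ _ _ => Sum.inl PUnit.unit

/-- `onBranch t b u` means that the node `u` lies on the branch `b`. -/
def onBranch : (t : STree) → t.Branch → t.NodeType → Prop
  | leaf, _, _ => True
  | node _ c _, ⟨i, b⟩, u =>
      match u with
      | Sum.inl _ => True
      | Sum.inr ⟨j, w⟩ => ∃ h : j = i, onBranch (c i) b (h ▸ w)

/-- Adjacency between tree nodes in the realization: the union of the edges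
of the graphs `g(v)` placed on the children of each internal node `v`
(tree edges are *not* included). -/
def treeAdj : (t : STree) → t.NodeType → t.NodeType → Prop
  | leaf, _, _ => False
  | node ι c g, u, v =>
      match u, v with
      | Sum.inr ⟨i, u'⟩, Sum.inr ⟨j, v'⟩ =>
          (∃ h : i = j, treeAdj (c j) (h ▸ u') v') ∨
          (g.Adj i j ∧ u' = root (c i) ∧ v' = root (c j))
      | _, _ => False

/-- The realization `R(T,g)` of a structured tree: its vertices are the tree
nodes together with the branches; edges are those of the graphs `g(v)`, plus
an edge from each branch vertex to every tree node lying on that branch. -/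
def realization (t : STree) : SimpleGraph (t.NodeType ⊕ t.Branch) :=
  SimpleGraph.fromRel (fun x y =>
    match x, y with
    | Sum.inl u, Sum.inl v => treeAdj t u v
    | Sum.inl u, Sum.inr b => onBranch t b u
    | Sum.inr b, Sum.inl u => onBranch t b u
    | Sum.inr _, Sum.inr _ => False)

/-- The level of a node (the root is at level 1). -/
def level : (t : STree) → t.NodeType → ℕ
  | leaf, _ => 1
  | node _ c _, u =>
      match u with
      | Sum.inl _ => 1
      | Sum.inr ⟨i, w⟩ => level (c i) w + 1

/-- `IsInternalGraphOf t ⟨ι, g⟩` means that `g` is the graph attached to some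
internal node of `t` (on its children, indexed by `ι`). -/
inductive IsInternalGraphOf : STree → (Σ ι : Type, SimpleGraph ι) → Prop where
  | here : ∀ (ι : Type) (c : ι → STree) (g : SimpleGraph ι),
      IsInternalGraphOf (node ι c g) ⟨ι, g⟩
  | child : ∀ (ι : Type) (c : ι → STree) (g : SimpleGraph ι) (i : ι) (p),
      IsInternalGraphOf (c i) p → IsInternalGraphOf (node ι c g) p

end STree

/-- Builds the structured tree in which all nodes at level `i` carry the
`i`-th graph of the list on their children (so the tree has `L.length + 1`
levels). -/
def buildTree : List (Σ V : Type, SimpleGraph V) → STree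
  | [] => .leaf
  | ⟨ι, g⟩ :: rest => .node ι (fun _ => buildTree rest) g

/-- The realization of a structured tree, packaged with its vertex type. -/
def realizationSigma (t : STree) : Σ V : Type, SimpleGraph V :=
  ⟨t.NodeType ⊕ t.Branch, t.realization⟩

/-- `twincutList m` is the list `[G₂, G₃, …, G_{m+1}]` of twincut graphs. -/
def twincutList : ℕ → List (Σ V : Type, SimpleGraph V)
  | 0 => []
  | m + 1 => twincutList m ++ [realizationSigma (buildTree (twincutList m))]

/-- The structured tree `T_{m+2}` whose realization is the twincut graph
`G_{m+2}`: it has `m + 1` levels, and every node at level `i ≤ m` carries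
the graph `G_{i+1}` on its children. -/
def twincutTree (m : ℕ) : STree := buildTree (twincutList m)

/-- The twincut graphs: `G 1` is the one-vertex graph, and for `k ≥ 2`,
`G k` is the realization of the structured tree `T_k`. -/
def twincutG : ℕ → Σ V : Type, SimpleGraph V
  | 0 => ⟨PUnit, ⊥⟩
  | 1 => ⟨PUnit, ⊥⟩
  | (m + 2) => realizationSigma (twincutTree m)
open SimpleGraph Classical

namespace STree

lemma treeAdj_symm : ∀ (t : STree) (u v : t.NodeType), treeAdj t u v → treeAdj t v u := by
  intro t
  induction t with
  | leaf => intro u v h; exact h.elim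
  | node ι c g ih =>
    rintro (u | ⟨i, u'⟩) (v | ⟨j, v'⟩) h <;> try exact h.elim
    rcases h with ⟨rfl, h⟩ | ⟨hadj, hu, hv⟩
    · exact Or.inl ⟨rfl, ih _ _ _ h⟩
    · exact Or.inr ⟨hadj.symm, hv, hu⟩

lemma onBranch_root : ∀ (t : STree) (b : t.Branch), onBranch t b t.root := by
  intro t b
  cases t with
  | leaf => trivial
  | node ι c g => obtain ⟨i, b⟩ := b; trivial

/-- All internal index types are nonempty. -/
def AllNE : STree → Prop
  | .leaf => True
  | .node ι c _ => Nonempty ι ∧ ∀ i, AllNE (c i)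

lemma branch_nonempty : ∀ (t : STree), AllNE t → Nonempty t.Branch := by
  intro t
  induction t with
  | leaf => exact fun _ => ⟨PUnit.unit⟩
  | node ι c g ih =>
    rintro ⟨⟨i⟩, h⟩
    obtain ⟨b⟩ := ih i (h i)
    exact ⟨⟨i, b⟩⟩

lemma exists_onBranch : ∀ (t : STree), AllNE t → ∀ u : t.NodeType, ∃ b, onBranch t b u := by
  intro t
  induction t with
  | leaf => exact fun _ u => ⟨PUnit.unit, trivial⟩
  | node ι c g ih =>
    rintro ⟨⟨i0⟩, hne⟩ (u | ⟨i, w⟩)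
    · obtain ⟨b⟩ := branch_nonempty (c i0) (hne i0)
      exact ⟨⟨i0, b⟩, trivial⟩
    · obtain ⟨b, hb⟩ := ih i (hne i) w
      exact ⟨⟨i, b⟩, ⟨rfl, hb⟩⟩

end STree
namespace STree

lemma exists_not_mem {n : ℕ} (S : Finset (Fin n)) (h : S.card < n) : ∃ c, c ∉ S := by
  by_contra hc
  push_neg at hc
  have hs : (Finset.univ : Finset (Fin n)) ⊆ S := fun x _ => hc x
  have := Finset.card_le_card hs
  simp at this; omega

lemma colorable_into {V : Type} {G : SimpleGraph V} {c n : ℕ} (hc : G.Colorable c)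
    (T : Finset (Fin n)) (hT : c ≤ T.card) :
    ∃ d : V → Fin n, (∀ v, d v ∈ T) ∧ ∀ {u v}, G.Adj u v → d u ≠ d v := by
  obtain ⟨C⟩ := hc
  refine ⟨fun v => (T.orderIsoOfFin rfl (Fin.castLE hT (C v)) : Fin n), fun v => ?_, ?_⟩
  · exact (T.orderIsoOfFin rfl (Fin.castLE hT (C v))).2
  · intro u v huv heq
    apply C.valid huv
    have := Subtype.ext heq
    have := (T.orderIsoOfFin rfl).injective this
    exact Fin.castLE_injective hT this

lemma spine_coloring {ι : Type} {H : SimpleGraph ι} {n : ℕ}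
    (T : Finset (Fin n)) (r' : Fin n) (hr' : r' ∉ T)
    (hdel : ∀ e ∈ H.edgeSet, (H.deleteEdges {e}).Colorable T.card)
    (i0 : ι) (hiso : ∃ u, H.Adj i0 u) :
    ∃ d : ι → Fin n, d i0 = r' ∧ (∀ i, i ≠ i0 → d i ∈ T) ∧ ∀ {i j}, H.Adj i j → d i ≠ d j := by
  obtain ⟨u, hu⟩ := hiso
  obtain ⟨d1, hd1T, hd1⟩ := colorable_into (hdel s(i0, u) (H.mem_edgeSet.2 hu)) T le_rfl
  refine ⟨fun i => if i = i0 then r' else d1 i, by simp, fun i hi => by simp [hi, hd1T], ?_⟩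
  intro i j hij
  by_cases h1 : i = i0 <;> by_cases h2 : j = i0 <;> simp [h1, h2]
  · subst h1 h2; exact absurd hij (H.irrefl)
  · subst h1; exact fun he => hr' (he ▸ hd1T j)
  · subst h2; exact fun he => hr' (he.symm ▸ hd1T i)
  · refine hd1 (SimpleGraph.deleteEdges_adj.2 ⟨hij, ?_⟩)
    simp only [Set.mem_singleton_iff, Sym2.eq_iff]
    rintro (⟨rfl, rfl⟩ | ⟨rfl, rfl⟩) <;> simp_all

/-- Criticality package for a list of graphs: the `i`-th entry is
`(c0+i+1)`-colorable, is edge-critical at level `c0+i`, and has no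
isolated vertices. -/
def GoodList (c0 : ℕ) (L : List (Σ V : Type, SimpleGraph V)) : Prop :=
  ∀ i (h : i < L.length),
    (L.get ⟨i, h⟩).2.Colorable (c0 + i + 1) ∧
    (∀ e ∈ (L.get ⟨i, h⟩).2.edgeSet, ((L.get ⟨i, h⟩).2.deleteEdges {e}).Colorable (c0 + i)) ∧
    (∀ v, ∃ u, (L.get ⟨i, h⟩).2.Adj v u)

lemma GoodList.tail {c0 : ℕ} {p : Σ V : Type, SimpleGraph V} {L : List (Σ V : Type, SimpleGraph V)}
    (h : GoodList c0 (p :: L)) : GoodList (c0 + 1) L := by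
  intro i hi
  have := h (i + 1) (by simpa using hi)
  have e1 : c0 + (i + 1) + 1 = c0 + 1 + i + 1 := by omega
  have e2 : c0 + (i + 1) = c0 + 1 + i := by omega
  rw [e1, e2] at this
  simpa using this

lemma GoodList.colorable_n {c0 n : ℕ} {L : List (Σ V : Type, SimpleGraph V)}
    (h : GoodList c0 L) (hn : c0 + L.length ≤ n) :
    ∀ i (hi : i < L.length), (L.get ⟨i, hi⟩).2.Colorable n :=
  fun i hi => ((h i hi).1).mono (by omega)

end STree
namespace STree

lemma safe : ∀ (L : List (Σ V : Type, SimpleGraph V)) {n : ℕ} (A : Finset (Fin n)) (r : Fin n),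
    (insert r A).card + L.length < n →
    (∀ i (h : i < L.length), (L.get ⟨i, h⟩).2.Colorable n) →
    ∃ (f : (buildTree L).NodeType → Fin n) (g : (buildTree L).Branch → Fin n),
      f (buildTree L).root = r ∧
      (∀ u v, treeAdj (buildTree L) u v → f u ≠ f v) ∧
      (∀ b, g b ∉ insert r A ∧ ∀ u, onBranch (buildTree L) b u → f u ≠ g b) := by
  intro L
  induction L with
  | nil =>
    intro n A r hcard _
    obtain ⟨c, hc⟩ := exists_not_mem (insert r A) (by simpa using hcard)
    refine ⟨fun _ => r, fun _ => c, rfl, fun u v h => h.elim, fun b => ⟨hc, fun u _ => ?_⟩⟩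
    exact fun h => hc ((show r = c from h) ▸ Finset.mem_insert_self r A)
  | cons p L' ih =>
    obtain ⟨ι, H⟩ := p
    intro n A r hcard hL
    obtain ⟨d, -, hd⟩ := colorable_into (hL 0 (by simp)) (Finset.univ : Finset (Fin n))
      (by rw [Finset.card_univ, Fintype.card_fin])
    have hsub : ∀ i : ι, ∃ (f : (buildTree L').NodeType → Fin n) (g : (buildTree L').Branch → Fin n),
        f (buildTree L').root = d i ∧
        (∀ u v, treeAdj (buildTree L') u v → f u ≠ f v) ∧
        (∀ b, g b ∉ insert (d i) (insert r A) ∧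
          ∀ u, onBranch (buildTree L') b u → f u ≠ g b) := by
      intro i
      refine ih (insert r A) (d i) ?_ (fun j hj => hL (j + 1) (by simpa using hj))
      calc (insert (d i) (insert r A)).card + L'.length
          ≤ (insert r A).card + 1 + L'.length := by
            exact Nat.add_le_add_right (Finset.card_insert_le _ _) _
        _ < n := by simp at hcard; omega
    choose f g hroot hadj hbr using hsub
    refine ⟨Sum.elim (fun _ => r) (fun x => f x.1 x.2), fun x => g x.1 x.2, rfl, ?_, ?_⟩
    · rintro (u | ⟨i, u'⟩) (v | ⟨j, v'⟩) h <;> try exact h.elim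
      rcases h with ⟨rfl, h⟩ | ⟨hHadj, hu, hv⟩
      · exact hadj i u' v' h
      · subst hu hv
        simp only [Sum.elim_inr]
        rw [hroot i, hroot j]
        exact hd hHadj
    · rintro ⟨i, b⟩
      refine ⟨fun hmem => (hbr i b).1 (Finset.mem_insert_of_mem hmem), ?_⟩
      rintro (u | ⟨j, w⟩) hob
      · exact fun h => (hbr i b).1
          ((show r = g i b from h) ▸ Finset.mem_insert_of_mem (Finset.mem_insert_self r A))
      · obtain ⟨rfl, hw⟩ := hob
        exact (hbr _ b).2 w hw

end STree
namespace STree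

lemma rainbow : ∀ (L : List (Σ V : Type, SimpleGraph V)) {n : ℕ} (A : Finset (Fin n)) (r : Fin n),
    r ∉ A →
    (insert r A).card + L.length ≤ n →
    GoodList (insert r A).card L →
    ∀ (b0 : (buildTree L).Branch) (u0 : (buildTree L).NodeType), onBranch (buildTree L) b0 u0 →
    ∃ (f : (buildTree L).NodeType → Fin n) (g : (buildTree L).Branch → Fin n),
      f (buildTree L).root = r ∧
      (∀ u v, treeAdj (buildTree L) u v → f u ≠ f v) ∧
      (∀ b, g b ∉ A) ∧
      (∀ u, onBranch (buildTree L) b0 u → f u ∉ A) ∧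
      (∀ b u, onBranch (buildTree L) b u → f u = g b → b = b0 ∧ u = u0) := by
  intro L
  induction L with
  | nil =>
    intro n A r hr hcard hGL b0 u0 h0
    exact ⟨fun _ => r, fun _ => r, rfl, fun u v h => h.elim, fun _ => hr,
      fun u _ => hr, fun b u _ _ => ⟨@Subsingleton.elim PUnit _ b b0, @Subsingleton.elim PUnit _ u u0⟩⟩
  | cons p L' ih =>
    obtain ⟨ι, H⟩ := p
    intro n A r hr hcard hGL b0 u0 h0
    obtain ⟨i0, b0'⟩ := b0
    set T := insert r A with hT
    have hlen : ((⟨ι, H⟩ : Σ V : Type, SimpleGraph V) :: L').length = L'.length + 1 := rfl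
    have hcn : T.card < n := by rw [hlen] at hcard; omega
    obtain ⟨r', hr'⟩ := exists_not_mem T hcn
    have hhead := hGL 0 (by simp)
    obtain ⟨d, hdi0, hdT, hd⟩ := spine_coloring T r' hr'
      (fun e he => by simpa using hhead.2.1 e he) i0 (hhead.2.2 i0)
    -- safe colorings for the non-spine children
    have hsafe : ∀ i : {i : ι // i ≠ i0},
        ∃ (f : (buildTree L').NodeType → Fin n) (g : (buildTree L').Branch → Fin n),
          f (buildTree L').root = d i.1 ∧
          (∀ u v, treeAdj (buildTree L') u v → f u ≠ f v) ∧
          (∀ b, g b ∉ insert (d i.1) T ∧ ∀ u, onBranch (buildTree L') b u → f u ≠ g b) := by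
      intro i
      refine safe L' T (d i.1) ?_ (GoodList.colorable_n hGL.tail (by rw [hlen] at hcard; omega))
      rw [Finset.insert_eq_self.mpr (hdT i.1 i.2)]
      rw [hlen] at hcard; omega
    choose fs gs hsroot hsadj hsbr using hsafe
    have hcard' : (insert r' T).card + L'.length ≤ n := by
      rw [Finset.card_insert_of_notMem hr']; rw [hlen] at hcard; omega
    have hGL' : GoodList (insert r' T).card L' := by
      rw [Finset.card_insert_of_notMem hr']; exact hGL.tail
    rcases u0 with u0p | ⟨j, w0⟩
    · -- designated node is the root
      obtain ⟨f', g', h'root, h'adj, h'gA, h'C4, h'C5⟩ :=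
        ih (A := T) r' hr' hcard' hGL' b0' (buildTree L').root (onBranch_root _ _)
      refine ⟨Sum.elim (fun _ => r) (fun x => if h : x.1 = i0 then f' x.2 else fs ⟨x.1, h⟩ x.2),
        fun x => if h : x.1 = i0 then (if x.2 = b0' then r else g' x.2) else gs ⟨x.1, h⟩ x.2,
        rfl, ?_, ?_, ?_, ?_⟩
      · -- treeAdj proper
        rintro (u | ⟨i, u'⟩) (v | ⟨j, v'⟩) h <;> try exact h.elim
        rcases h with ⟨rfl, h⟩ | ⟨hH, hu, hv⟩
        · simp only [Sum.elim_inr]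
          by_cases hi : i = i0
          · simp only [dif_pos hi]; exact h'adj u' v' h
          · simp only [dif_neg hi]; exact hsadj ⟨i, hi⟩ u' v' h
        · subst hu hv
          simp only [Sum.elim_inr]
          by_cases hi : i = i0 <;> by_cases hj : j = i0
          · exact ((H.irrefl) (hj ▸ hi ▸ hH)).elim
          · simp only [dif_pos hi, dif_neg hj]
            rw [h'root, hsroot ⟨j, hj⟩]
            exact fun he => hr' (he ▸ hdT j hj)
          · simp only [dif_neg hi, dif_pos hj]
            rw [h'root, hsroot ⟨i, hi⟩]
            intro he; apply hr'; rw [← he]; exact hdT i hi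
          · simp only [dif_neg hi, dif_neg hj]
            rw [hsroot ⟨i, hi⟩, hsroot ⟨j, hj⟩]
            exact hd hH
      · -- branch colors avoid A
        rintro ⟨i, b⟩
        by_cases hi : i = i0
        · simp only [dif_pos hi]
          by_cases hb : b = b0'
          · simpa [hb] using hr
          · simp only [if_neg hb]
            exact fun hmem => h'gA b (Finset.mem_insert_of_mem hmem)
        · simp only [dif_neg hi]
          exact fun hmem => (hsbr ⟨i, hi⟩ b).1
            (Finset.mem_insert_of_mem (Finset.mem_insert_of_mem hmem))
      · -- nodes on the designated branch avoid A
        rintro (u | ⟨j, w⟩) hob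
        · exact hr
        · obtain ⟨rfl, hw⟩ := hob
          simp only [Sum.elim_inr, dif_pos rfl]
          exact fun hmem => h'C4 w hw (Finset.mem_insert_of_mem hmem)
      · -- conflicts only at (b0, root)
        rintro ⟨i, b⟩ (u | ⟨j, w⟩) hob heq
        · by_cases hi : i = i0
          · by_cases hb : b = b0'
            · subst hi; subst hb; exact ⟨rfl, by cases u; cases u0p; rfl⟩
            · exfalso
              simp only [Sum.elim_inl, dif_pos hi, if_neg hb] at heq
              exact h'gA b (heq ▸ Finset.mem_insert_self r A)
          · exfalso
            simp only [Sum.elim_inl, dif_neg hi] at heq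
            exact (hsbr ⟨i, hi⟩ b).1
              (heq ▸ Finset.mem_insert_of_mem (Finset.mem_insert_self r A))
        · exfalso
          obtain ⟨rfl, hw⟩ := hob
          by_cases hi : j = i0
          · simp only [Sum.elim_inr, dif_pos hi] at heq
            by_cases hb : b = b0'
            · subst hb
              simp only [if_pos rfl] at heq
              exact h'C4 w hw (heq ▸ Finset.mem_insert_self r A)
            · simp only [if_neg hb] at heq
              exact hb (h'C5 b w hw heq).1
          · simp only [Sum.elim_inr, dif_neg hi] at heq
            exact (hsbr ⟨j, hi⟩ b).2 w hw heq
    · -- designated node is deeper: u0 = inr ⟨j, w0⟩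
      obtain ⟨rfl, hw0⟩ := h0
      obtain ⟨f', g', h'root, h'adj, h'gA, h'C4, h'C5⟩ :=
        ih (A := T) r' hr' hcard' hGL' b0' w0 hw0
      refine ⟨Sum.elim (fun _ => r) (fun x => if h : x.1 = j then f' x.2 else fs ⟨x.1, h⟩ x.2),
        fun x => if h : x.1 = j then g' x.2 else gs ⟨x.1, h⟩ x.2,
        rfl, ?_, ?_, ?_, ?_⟩
      · rintro (u | ⟨i, u'⟩) (v | ⟨j', v'⟩) h <;> try exact h.elim
        rcases h with ⟨rfl, h⟩ | ⟨hH, hu, hv⟩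
        · simp only [Sum.elim_inr]
          by_cases hi : i = j
          · simp only [dif_pos hi]; exact h'adj u' v' h
          · simp only [dif_neg hi]; exact hsadj ⟨i, hi⟩ u' v' h
        · subst hu hv
          simp only [Sum.elim_inr]
          by_cases hi : i = j <;> by_cases hj : j' = j
          · exact ((H.irrefl) (hj ▸ hi ▸ hH)).elim
          · simp only [dif_pos hi, dif_neg hj]
            rw [h'root, hsroot ⟨j', hj⟩]
            exact fun he => hr' (he ▸ hdT j' hj)
          · simp only [dif_neg hi, dif_pos hj]
            rw [h'root, hsroot ⟨i, hi⟩]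
            intro he; apply hr'; rw [← he]; exact hdT i hi
          · simp only [dif_neg hi, dif_neg hj]
            rw [hsroot ⟨i, hi⟩, hsroot ⟨j', hj⟩]
            exact hd hH
      · rintro ⟨i, b⟩
        by_cases hi : i = j
        · simp only [dif_pos hi]
          exact fun hmem => h'gA b (Finset.mem_insert_of_mem hmem)
        · simp only [dif_neg hi]
          exact fun hmem => (hsbr ⟨i, hi⟩ b).1
            (Finset.mem_insert_of_mem (Finset.mem_insert_of_mem hmem))
      · rintro (u | ⟨j', w⟩) hob
        · exact hr
        · obtain ⟨rfl, hw⟩ := hob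
          simp only [Sum.elim_inr, dif_pos rfl]
          exact fun hmem => h'C4 w hw (Finset.mem_insert_of_mem hmem)
      · rintro ⟨i, b⟩ (u | ⟨j', w⟩) hob heq
        · exfalso
          by_cases hi : i = j
          · simp only [Sum.elim_inl, dif_pos hi] at heq
            exact h'gA b (heq ▸ Finset.mem_insert_self r A)
          · simp only [Sum.elim_inl, dif_neg hi] at heq
            exact (hsbr ⟨i, hi⟩ b).1
              (heq ▸ Finset.mem_insert_of_mem (Finset.mem_insert_self r A))
        · obtain ⟨rfl, hw⟩ := hob
          by_cases hi : j' = j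
          · subst hi
            simp only [Sum.elim_inr, dif_pos rfl] at heq
            obtain ⟨rfl, rfl⟩ := h'C5 b w hw heq
            exact ⟨rfl, rfl⟩
          · exfalso
            simp only [Sum.elim_inr, dif_neg hi] at heq
            exact (hsbr ⟨j', hi⟩ b).2 w hw heq

end STree
namespace STree

lemma realization_adj {t : STree} {x y : t.NodeType ⊕ t.Branch} (h : (realization t).Adj x y) :
    x ≠ y ∧
      ((∃ u v, x = Sum.inl u ∧ y = Sum.inl v ∧ (treeAdj t u v ∨ treeAdj t v u)) ∨
       (∃ u b, x = Sum.inl u ∧ y = Sum.inr b ∧ onBranch t b u) ∨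
       (∃ u b, x = Sum.inr b ∧ y = Sum.inl u ∧ onBranch t b u)) := by
  have h' := (SimpleGraph.fromRel_adj _ x y).1 h
  obtain ⟨hne, hrel⟩ := h'
  refine ⟨hne, ?_⟩
  rcases x with u | b <;> rcases y with v | b' <;> rcases hrel with h1 | h1
  · exact Or.inl ⟨u, v, rfl, rfl, Or.inl h1⟩
  · exact Or.inl ⟨u, v, rfl, rfl, Or.inr h1⟩
  · exact Or.inr (Or.inl ⟨u, b', rfl, rfl, h1⟩)
  · exact Or.inr (Or.inl ⟨u, b', rfl, rfl, h1⟩)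
  · exact Or.inr (Or.inr ⟨v, b, rfl, rfl, h1⟩)
  · exact Or.inr (Or.inr ⟨v, b, rfl, rfl, h1⟩)
  · exact h1.elim
  · exact h1.elim

lemma adj_of_treeAdj {t : STree} {u v : t.NodeType} (hne : u ≠ v) (h : treeAdj t u v) :
    (realization t).Adj (Sum.inl u) (Sum.inl v) :=
  (SimpleGraph.fromRel_adj _ _ _).2 ⟨fun hh => hne (Sum.inl.inj hh), Or.inl h⟩

lemma adj_of_onBranch {t : STree} {u : t.NodeType} {b : t.Branch} (h : onBranch t b u) :
    (realization t).Adj (Sum.inl u) (Sum.inr b) :=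
  (SimpleGraph.fromRel_adj _ _ _).2 ⟨fun hh => Sum.inl_ne_inr hh, Or.inl h⟩

lemma branch_edge_coloring (L : List (Σ V : Type, SimpleGraph V)) {n : ℕ}
    (A : Finset (Fin n)) (r : Fin n)
    (hr : r ∉ A) (hcard : (insert r A).card + L.length ≤ n)
    (hGL : GoodList (insert r A).card L)
    (b0 : (buildTree L).Branch) (u0 : (buildTree L).NodeType)
    (h0 : onBranch (buildTree L) b0 u0) :
    ∃ F : ((buildTree L).NodeType ⊕ (buildTree L).Branch) → Fin n,
      F (Sum.inl (buildTree L).root) = r ∧ (∀ b, F (Sum.inr b) ∉ A) ∧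
      ∀ x y, ((realization (buildTree L)).deleteEdges
        {s(Sum.inl u0, Sum.inr b0)}).Adj x y → F x ≠ F y := by
  obtain ⟨f, g, h1, h2, h3, h4, h5⟩ := rainbow L A r hr hcard hGL b0 u0 h0
  refine ⟨Sum.elim f g, h1, h3, ?_⟩
  intro x y hxy
  rw [SimpleGraph.deleteEdges_adj] at hxy
  obtain ⟨hadj, hne⟩ := hxy
  obtain ⟨hxyne, hshape⟩ := realization_adj hadj
  rcases hshape with ⟨u, v, rfl, rfl, h | h⟩ | ⟨u, b, rfl, rfl, h⟩ | ⟨u, b, rfl, rfl, h⟩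
  · exact h2 u v h
  · exact (h2 v u h).symm
  · intro heq
    obtain ⟨rfl, rfl⟩ := h5 b u h heq
    exact hne rfl
  · intro heq
    obtain ⟨rfl, rfl⟩ := h5 b u h heq.symm
    exact hne (by rw [Sym2.eq_swap]; rfl)

end STree
namespace STree

lemma danger : ∀ (L : List (Σ V : Type, SimpleGraph V)) {n : ℕ} (A : Finset (Fin n)) (r : Fin n),
    r ∉ A →
    (insert r A).card + L.length ≤ n →
    GoodList (insert r A).card L →
    ∀ e ∈ (realization (buildTree L)).edgeSet,
    ∃ F : ((buildTree L).NodeType ⊕ (buildTree L).Branch) → Fin n,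
      F (Sum.inl (buildTree L).root) = r ∧
      (∀ b, F (Sum.inr b) ∉ A) ∧
      (∀ x y, ((realization (buildTree L)).deleteEdges {e}).Adj x y → F x ≠ F y) := by
  intro L
  induction L with
  | nil =>
    intro n A r hr hcard hGL e he
    induction e using Sym2.ind with
    | _ x0 y0 =>
      have hadj0 : (realization (buildTree [])).Adj x0 y0 := he
      obtain ⟨hne0, hsh⟩ := realization_adj hadj0
      rcases hsh with ⟨u, v, rfl, rfl, h | h⟩ | ⟨u, b, rfl, rfl, h⟩ | ⟨u, b, rfl, rfl, h⟩
      · exact h.elim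
      · exact h.elim
      · exact branch_edge_coloring [] A r hr hcard hGL b u h
      · rw [Sym2.eq_swap]
        exact branch_edge_coloring [] A r hr hcard hGL b u h
  | cons p L' ih =>
    obtain ⟨ι, H⟩ := p
    intro n A r hr hcard hGL e he
    induction e using Sym2.ind with
    | _ x0 y0 =>
      have hadj0 : (realization (buildTree (⟨ι, H⟩ :: L'))).Adj x0 y0 := he
      obtain ⟨hne0, hsh⟩ := realization_adj hadj0
      rcases hsh with ⟨u, v, rfl, rfl, hor⟩ | ⟨u, b, rfl, rfl, h⟩ | ⟨u, b, rfl, rfl, h⟩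
      -- node-node case
      · set T := insert r A with hT
        have hcard2 : T.card + (L'.length + 1) ≤ n := hcard
        have hcn : T.card < n := by omega
        obtain ⟨r', hr'⟩ := exists_not_mem T hcn
        have hhead := hGL 0 (by simp)
        have hcard' : (insert r' T).card + L'.length ≤ n := by
          rw [Finset.card_insert_of_notMem hr']; omega
        have hGL' : GoodList (insert r' T).card L' := by
          rw [Finset.card_insert_of_notMem hr']; exact hGL.tail
        have hcoln : ∀ i (hi : i < L'.length), (L'.get ⟨i, hi⟩).2.Colorable n :=
          GoodList.colorable_n hGL.tail (by omega)
        have main : ∀ (u v : (buildTree (⟨ι, H⟩ :: L')).NodeType),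
            (Sum.inl u : (buildTree (⟨ι, H⟩ :: L')).NodeType ⊕
              (buildTree (⟨ι, H⟩ :: L')).Branch) ≠ Sum.inl v →
            treeAdj (buildTree (⟨ι, H⟩ :: L')) u v →
            ∃ F : ((buildTree (⟨ι, H⟩ :: L')).NodeType ⊕
                (buildTree (⟨ι, H⟩ :: L')).Branch) → Fin n,
              F (Sum.inl (buildTree (⟨ι, H⟩ :: L')).root) = r ∧
              (∀ b, F (Sum.inr b) ∉ A) ∧
              (∀ x y, ((realization (buildTree (⟨ι, H⟩ :: L'))).deleteEdges
                {s(Sum.inl u, Sum.inl v)}).Adj x y → F x ≠ F y) := by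
          rintro (u0 | ⟨i0, u'⟩) (v0 | ⟨j0, v'⟩) hne h <;> try exact h.elim
          rcases h with ⟨rfl, hrec⟩ | ⟨hH, hu, hv⟩
          · -- deleted edge lies inside the subtree at child i0
            obtain ⟨d, hdi0, hdT, hd⟩ := spine_coloring T r' hr'
              (fun e' he' => by simpa using hhead.2.1 e' he') i0 (hhead.2.2 i0)
            have hsafe : ∀ i : {i : ι // i ≠ i0},
                ∃ (f : (buildTree L').NodeType → Fin n) (g : (buildTree L').Branch → Fin n),
                  f (buildTree L').root = d i.1 ∧
                  (∀ u v, treeAdj (buildTree L') u v → f u ≠ f v) ∧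
                  (∀ b, g b ∉ insert (d i.1) T ∧
                    ∀ u, onBranch (buildTree L') b u → f u ≠ g b) := by
              intro i
              refine safe L' T (d i.1) ?_ hcoln
              rw [Finset.insert_eq_self.mpr (hdT i.1 i.2)]; omega
            choose fs gs hsroot hsadj hsbr using hsafe
            have hu'v' : u' ≠ v' := fun hh => hne (by rw [hh])
            obtain ⟨F', h'1, h'2, h'3⟩ := ih (A := T) r' hr' hcard' hGL'
              s(Sum.inl u', Sum.inl v')
              ((realization _).mem_edgeSet.2 (adj_of_treeAdj hu'v' hrec))
            set FF : ((buildTree (⟨ι, H⟩ :: L')).NodeType ⊕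
                (buildTree (⟨ι, H⟩ :: L')).Branch) → Fin n :=
              Sum.elim (Sum.elim (fun _ => r)
                (fun x => if h : x.1 = i0 then F' (Sum.inl x.2) else fs ⟨x.1, h⟩ x.2))
                (fun x => if h : x.1 = i0 then F' (Sum.inr x.2) else gs ⟨x.1, h⟩ x.2) with hFF
            refine ⟨FF, by rw [hFF]; rfl, ?_, ?_⟩
            · rintro ⟨i, b⟩
              rw [hFF]
              by_cases hi : i = i0
              · simp only [Sum.elim, Sum.elim_inr, dif_pos hi]
                exact fun hmem => h'2 b (Finset.mem_insert_of_mem hmem)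
              · simp only [Sum.elim, Sum.elim_inr, dif_neg hi]
                exact fun hmem => (hsbr ⟨i, hi⟩ b).1
                  (Finset.mem_insert_of_mem (Finset.mem_insert_of_mem hmem))
            · intro x y hxy
              rw [SimpleGraph.deleteEdges_adj] at hxy
              obtain ⟨hadj, hnE⟩ := hxy
              rw [Set.mem_singleton_iff] at hnE
              obtain ⟨hxyne, hsh2⟩ := realization_adj hadj
              have NN : ∀ (a c : (buildTree (⟨ι, H⟩ :: L')).NodeType),
                  (Sum.inl a : (buildTree (⟨ι, H⟩ :: L')).NodeType ⊕
                    (buildTree (⟨ι, H⟩ :: L')).Branch) ≠ Sum.inl c →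
                  s(Sum.inl a, Sum.inl c) ≠
                    (s(Sum.inl (Sum.inr ⟨i0, u'⟩), Sum.inl (Sum.inr ⟨i0, v'⟩)) :
                      Sym2 ((buildTree (⟨ι, H⟩ :: L')).NodeType ⊕
                        (buildTree (⟨ι, H⟩ :: L')).Branch)) →
                  treeAdj (buildTree (⟨ι, H⟩ :: L')) a c →
                  FF (Sum.inl a) ≠ FF (Sum.inl c) := by
                rintro (a0 | ⟨i1, w1⟩) (c0 | ⟨i2, w2⟩) hnac hnee h <;> try exact h.elim
                rcases h with ⟨rfl, hrec2⟩ | ⟨hH2, hu2, hv2⟩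
                · rw [hFF]
                  simp only [Sum.elim_inl, Sum.elim_inr]
                  by_cases hi1 : i1 = i0
                  · subst hi1
                    simp only [Sum.elim, dif_pos rfl]
                    refine h'3 (Sum.inl w1) (Sum.inl w2) (SimpleGraph.deleteEdges_adj.2
                      ⟨adj_of_treeAdj (fun hh => hnac (by rw [hh])) hrec2, ?_⟩)
                    rw [Set.mem_singleton_iff, Sym2.eq_iff]
                    rintro (⟨h1, h2⟩ | ⟨h1, h2⟩) <;> apply hnee
                    · rw [Sum.inl.inj h1, Sum.inl.inj h2]
                    · rw [Sum.inl.inj h1, Sum.inl.inj h2, Sym2.eq_swap]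
                  · simp only [Sum.elim, dif_neg hi1]
                    exact hsadj ⟨i1, hi1⟩ w1 w2 hrec2
                · subst hu2 hv2
                  rw [hFF]
                  simp only [Sum.elim_inl, Sum.elim_inr]
                  by_cases hi1 : i1 = i0 <;> by_cases hi2 : i2 = i0
                  · exact ((H.irrefl) (hi2 ▸ hi1 ▸ hH2)).elim
                  · simp only [Sum.elim, dif_pos hi1, dif_neg hi2]
                    rw [h'1, hsroot ⟨i2, hi2⟩]
                    exact fun he2 => hr' (he2 ▸ hdT i2 hi2)
                  · simp only [Sum.elim, dif_neg hi1, dif_pos hi2]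
                    rw [h'1, hsroot ⟨i1, hi1⟩]
                    intro he2; apply hr'; rw [← he2]; exact hdT i1 hi1
                  · simp only [Sum.elim, dif_neg hi1, dif_neg hi2]
                    rw [hsroot ⟨i1, hi1⟩, hsroot ⟨i2, hi2⟩]
                    exact hd hH2
              have NB : ∀ (a : (buildTree (⟨ι, H⟩ :: L')).NodeType)
                  (bb : (buildTree (⟨ι, H⟩ :: L')).Branch),
                  onBranch (buildTree (⟨ι, H⟩ :: L')) bb a →
                  FF (Sum.inl a) ≠ FF (Sum.inr bb) := by
                rintro (a0 | ⟨i1, w⟩) ⟨i2, b⟩ honb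
                · rw [hFF]
                  simp only [Sum.elim_inl, Sum.elim_inr]
                  by_cases hi2 : i2 = i0
                  · simp only [Sum.elim, dif_pos hi2]
                    exact fun he2 => h'2 b (he2 ▸ Finset.mem_insert_self r A)
                  · simp only [Sum.elim, dif_neg hi2]
                    exact fun he2 => (hsbr ⟨i2, hi2⟩ b).1
                      (he2 ▸ Finset.mem_insert_of_mem (Finset.mem_insert_self r A))
                · obtain ⟨rfl, hw⟩ := honb
                  rw [hFF]
                  simp only [Sum.elim_inl, Sum.elim_inr]
                  by_cases hi1 : i1 = i0
                  · subst hi1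
                    simp only [Sum.elim, dif_pos rfl]
                    refine h'3 (Sum.inl w) (Sum.inr b) (SimpleGraph.deleteEdges_adj.2
                      ⟨adj_of_onBranch hw, ?_⟩)
                    rw [Set.mem_singleton_iff, Sym2.eq_iff]
                    rintro (⟨h1, h2⟩ | ⟨h1, h2⟩) <;> exact Sum.inr_ne_inl h2
                  · simp only [Sum.elim, dif_neg hi1]
                    exact (hsbr ⟨i1, hi1⟩ b).2 w hw
              rcases hsh2 with ⟨a, c, rfl, rfl, h | h⟩ | ⟨a, bb, rfl, rfl, h⟩ | ⟨a, bb, rfl, rfl, h⟩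
              · exact NN a c hxyne hnE h
              · exact (NN c a (fun hh => hxyne hh.symm)
                  (fun hh => hnE (by rw [← hh, Sym2.eq_swap])) h).symm
              · exact NB a bb h
              · exact (NB a bb h).symm
          · -- deleted edge is an edge of the graph H at the root
            subst hu hv
            have hedge : s(i0, j0) ∈ H.edgeSet := H.mem_edgeSet.2 hH
            obtain ⟨d, hdT, hd⟩ := colorable_into
              (by exact hhead.2.1 s(i0, j0) hedge :
                (H.deleteEdges {s(i0, j0)}).Colorable T.card)
              T le_rfl
            have hsafe : ∀ i : ι,
                ∃ (f : (buildTree L').NodeType → Fin n) (g : (buildTree L').Branch → Fin n),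
                  f (buildTree L').root = d i ∧
                  (∀ u v, treeAdj (buildTree L') u v → f u ≠ f v) ∧
                  (∀ b, g b ∉ insert (d i) T ∧
                    ∀ u, onBranch (buildTree L') b u → f u ≠ g b) := by
              intro i
              refine safe L' T (d i) ?_ hcoln
              rw [Finset.insert_eq_self.mpr (hdT i)]; omega
            choose fs gs hsroot hsadj hsbr using hsafe
            set FF : ((buildTree (⟨ι, H⟩ :: L')).NodeType ⊕
                (buildTree (⟨ι, H⟩ :: L')).Branch) → Fin n :=
              Sum.elim (Sum.elim (fun _ => r) (fun x => fs x.1 x.2))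
                (fun x => gs x.1 x.2) with hFF
            refine ⟨FF, by rw [hFF]; rfl, ?_, ?_⟩
            · rintro ⟨i, b⟩
              rw [hFF]
              exact fun hmem => (hsbr i b).1
                (Finset.mem_insert_of_mem (Finset.mem_insert_of_mem hmem))
            · intro x y hxy
              rw [SimpleGraph.deleteEdges_adj] at hxy
              obtain ⟨hadj, hnE⟩ := hxy
              rw [Set.mem_singleton_iff] at hnE
              obtain ⟨hxyne, hsh2⟩ := realization_adj hadj
              have NN : ∀ (a c : (buildTree (⟨ι, H⟩ :: L')).NodeType),
                  (Sum.inl a : (buildTree (⟨ι, H⟩ :: L')).NodeType ⊕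
                    (buildTree (⟨ι, H⟩ :: L')).Branch) ≠ Sum.inl c →
                  s(Sum.inl a, Sum.inl c) ≠
                    (s(Sum.inl (Sum.inr ⟨i0, (buildTree L').root⟩),
                      Sum.inl (Sum.inr ⟨j0, (buildTree L').root⟩)) :
                      Sym2 ((buildTree (⟨ι, H⟩ :: L')).NodeType ⊕
                        (buildTree (⟨ι, H⟩ :: L')).Branch)) →
                  treeAdj (buildTree (⟨ι, H⟩ :: L')) a c →
                  FF (Sum.inl a) ≠ FF (Sum.inl c) := by
                rintro (a0 | ⟨i1, w1⟩) (c0 | ⟨i2, w2⟩) hnac hnee h <;> try exact h.elim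
                rcases h with ⟨rfl, hrec2⟩ | ⟨hH2, hu2, hv2⟩
                · rw [hFF]
                  simp only [Sum.elim_inl, Sum.elim_inr]
                  exact hsadj i1 w1 w2 hrec2
                · subst hu2 hv2
                  rw [hFF]
                  simp only [Sum.elim, Sum.elim_inl, Sum.elim_inr]
                  rw [hsroot i1, hsroot i2]
                  refine hd (SimpleGraph.deleteEdges_adj.2 ⟨hH2, ?_⟩)
                  rw [Set.mem_singleton_iff, Sym2.eq_iff]
                  rintro (⟨rfl, rfl⟩ | ⟨rfl, rfl⟩) <;> apply hnee
                  · rfl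
                  · rw [Sym2.eq_swap]
              have NB : ∀ (a : (buildTree (⟨ι, H⟩ :: L')).NodeType)
                  (bb : (buildTree (⟨ι, H⟩ :: L')).Branch),
                  onBranch (buildTree (⟨ι, H⟩ :: L')) bb a →
                  FF (Sum.inl a) ≠ FF (Sum.inr bb) := by
                rintro (a0 | ⟨i1, w⟩) ⟨i2, b⟩ honb
                · rw [hFF]
                  simp only [Sum.elim, Sum.elim_inl, Sum.elim_inr]
                  exact fun he2 => (hsbr i2 b).1
                    (he2 ▸ Finset.mem_insert_of_mem (Finset.mem_insert_self r A))
                · obtain ⟨rfl, hw⟩ := honb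
                  rw [hFF]
                  simp only [Sum.elim, Sum.elim_inl, Sum.elim_inr]
                  exact (hsbr i1 b).2 w hw
              rcases hsh2 with ⟨a, c, rfl, rfl, h | h⟩ | ⟨a, bb, rfl, rfl, h⟩ | ⟨a, bb, rfl, rfl, h⟩
              · exact NN a c hxyne hnE h
              · exact (NN c a (fun hh => hxyne hh.symm)
                  (fun hh => hnE (by rw [← hh, Sym2.eq_swap])) h).symm
              · exact NB a bb h
              · exact (NB a bb h).symm
        rcases hor with h | h
        · exact main u v hne0 h
        · rw [Sym2.eq_swap]
          exact main v u (fun hh => hne0 hh.symm) h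
      · exact branch_edge_coloring _ A r hr hcard hGL b u h
      · rw [Sym2.eq_swap]
        exact branch_edge_coloring _ A r hr hcard hGL b u h

end STree
namespace STree

lemma realization_colorable (L : List (Σ V : Type, SimpleGraph V)) {n : ℕ}
    (hcard : 1 + L.length < n)
    (hL : ∀ i (h : i < L.length), (L.get ⟨i, h⟩).2.Colorable n) :
    (realization (buildTree L)).Colorable n := by
  have hn : 0 < n := by omega
  obtain ⟨f, g, h1, h2, h3⟩ := safe L (∅ : Finset (Fin n)) ⟨0, hn⟩
    (by rw [Finset.card_insert_of_notMem (Finset.notMem_empty _), Finset.card_empty]; omega) hL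
  refine ⟨SimpleGraph.Coloring.mk (Sum.elim f g) ?_⟩
  intro x y hadj heq
  obtain ⟨hxyne, hsh⟩ := realization_adj hadj
  rcases hsh with ⟨a, c, rfl, rfl, h | h⟩ | ⟨a, bb, rfl, rfl, h⟩ | ⟨a, bb, rfl, rfl, h⟩
  · exact h2 a c h heq
  · exact h2 c a h heq.symm
  · exact (h3 bb).2 a h heq
  · exact (h3 bb).2 a h heq.symm

lemma realization_no_isolated {t : STree} (hNE : AllNE t)
    (x : t.NodeType ⊕ t.Branch) : ∃ y, (realization t).Adj x y := by
  rcases x with u | b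
  · obtain ⟨b, hb⟩ := exists_onBranch t hNE u
    exact ⟨Sum.inr b, adj_of_onBranch hb⟩
  · exact ⟨Sum.inl t.root, (adj_of_onBranch (onBranch_root t b)).symm⟩

lemma allNE_buildTree : ∀ (L : List (Σ V : Type, SimpleGraph V)),
    (∀ i (h : i < L.length), Nonempty ((L.get ⟨i, h⟩).1)) → AllNE (buildTree L) := by
  intro L
  induction L with
  | nil => exact fun _ => trivial
  | cons p L' ih =>
    obtain ⟨ι, H⟩ := p
    intro hne
    exact ⟨hne 0 (by simp), fun _ => ih (fun i hi => hne (i + 1) (by simpa using hi))⟩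

end STree

lemma twincutList_length : ∀ m, (twincutList m).length = m := by
  intro m
  induction m with
  | zero => rfl
  | succ m ih => simp [twincutList, ih]

lemma twincutList_nonempty : ∀ m i (h : i < (twincutList m).length),
    Nonempty (((twincutList m).get ⟨i, h⟩).1) := by
  intro m
  induction m with
  | zero => intro i h; simp [twincutList] at h
  | succ m ih =>
    intro i h
    have h' : i < (twincutList m ++ [realizationSigma (buildTree (twincutList m))]).length := h
    have hrw : (twincutList (m + 1)).get ⟨i, h⟩
        = (twincutList m ++ [realizationSigma (buildTree (twincutList m))]).get ⟨i, h'⟩ := rfl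
    rw [hrw, List.get_eq_getElem]
    by_cases hi : i < (twincutList m).length
    · rw [List.getElem_append_left hi]
      exact ih i hi
    · have hlen : i = (twincutList m).length := by
        have h3 : i < (twincutList m).length + 1 := by simpa using h'
        omega
      subst hlen
      rw [List.getElem_concat_length]
      · exact ⟨Sum.inl (STree.root _)⟩
      · rfl

lemma goodList_twincut : ∀ m, STree.GoodList 1 (twincutList m) := by
  intro m
  induction m with
  | zero => intro i h; simp [twincutList] at h
  | succ m ih =>
    intro i h
    have h' : i < (twincutList m ++ [realizationSigma (buildTree (twincutList m))]).length := h
    have hrw : (twincutList (m + 1)).get ⟨i, h⟩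
        = (twincutList m ++ [realizationSigma (buildTree (twincutList m))]).get ⟨i, h'⟩ := rfl
    rw [hrw, List.get_eq_getElem]
    by_cases hi : i < (twincutList m).length
    · rw [List.getElem_append_left hi]
      have := ih i hi
      rwa [List.get_eq_getElem] at this
    · have hlen : i = (twincutList m).length := by
        have h3 : i < (twincutList m).length + 1 := by simpa using h'
        omega
      subst hlen
      rw [List.getElem_concat_length, twincutList_length]
      refine ⟨?_, ?_, ?_⟩
      · -- Colorable (1 + m + 1)
        refine STree.realization_colorable (twincutList m) ?_ ?_
        · rw [twincutList_length]; omega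
        · intro i hi
          exact ((ih i hi).1).mono (by rw [twincutList_length] at hi; omega)
      · -- edge-criticality
        intro e he
        have h0 : (0 : ℕ) < 1 + m := by omega
        have hc1 : (insert (⟨0, h0⟩ : Fin (1 + m)) (∅ : Finset (Fin (1 + m)))).card = 1 := by
          simp
        obtain ⟨F, hF1, hF2, hF3⟩ := STree.danger (twincutList m) (n := 1 + m)
          ∅ ⟨0, h0⟩ (Finset.notMem_empty _)
          (by rw [hc1, twincutList_length])
          (by rw [hc1]; exact ih) e he
        exact ⟨SimpleGraph.Coloring.mk F (fun hadj => hF3 _ _ hadj)⟩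
      · -- no isolated vertices
        intro v
        obtain ⟨y, hy⟩ := STree.realization_no_isolated
          (STree.allNE_buildTree _ (twincutList_nonempty m)) v
        exact ⟨y, hy⟩
      rfl
/-- the twincut graphs are edge-critical: removing any edge
from `G_k` yields a `(k-1)`-colorable graph. -/
theorem twincut_edge_critical (k : ℕ) (hk : 1 ≤ k)
    (e : Sym2 (twincutG k).1) (he : e ∈ (twincutG k).2.edgeSet) :
    ((twincutG k).2.deleteEdges {e}).Colorable (k - 1) := by
  match k, hk with
  | 1, _ =>
    exfalso
    have hbot : (twincutG 1).2 = (⊥ : SimpleGraph PUnit) := rfl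
    rw [hbot] at he
    exact (show ∀ e' : Sym2 PUnit, e' ∉ (⊥ : SimpleGraph PUnit).edgeSet by simp) e he
  | (m + 2), _ =>
    show ((STree.realization (buildTree (twincutList m))).deleteEdges {e}).Colorable (m + 1)
    have h0 : (0 : ℕ) < m + 1 := by omega
    have hc1 : (insert (⟨0, h0⟩ : Fin (m + 1)) (∅ : Finset (Fin (m + 1)))).card = 1 := by simp
    obtain ⟨F, hF1, hF2, hF3⟩ := STree.danger (twincutList m) (n := m + 1)
      ∅ ⟨0, h0⟩ (Finset.notMem_empty _)
      (by rw [hc1, twincutList_length]; omega)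
      (by rw [hc1]; exact goodList_twincut m) e he
    exact ⟨SimpleGraph.Coloring.mk F (fun hadj => hF3 _ _ hadj)⟩
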